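/- Let 0 < a < 1 and define f : ℂ² → ℂ² by f(z, w) = (z² + a w, a z). If (z, w) ∈ ℂ² satisfies |z| > 3 and |z| > |w|, then the image (z′, w′) = f(z, w) satisfies |z′| > 3 and |z′| > |w′|, and moreover ‖f(z, w)‖ ≥ ‖(z, w)‖ + 1, where ‖·‖ is the Euclidean norm on ℂ². -/

import Mathlib

open Filter Metric Set
open scoped ENNReal

noncomputable section

/-- `ℂ²` with the Euclidean norm. -/
abbrev E2 := EuclideanSpace ℂ (Fin 2)

/-- The map `f(z, w) = (z² + a w, a z)` on `ℂ²`. -/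
def henon (a : ℂ) (p : E2) : E2 :=
  (WithLp.equiv 2 (Fin 2 → ℂ)).symm ![(p 0) ^ 2 + a * p 1, a * p 0]

lemma E2_norm_eq (q : E2) : ‖q‖ = Real.sqrt (‖q 0‖ ^ 2 + ‖q 1‖ ^ 2) := by
  rw [EuclideanSpace.norm_eq, Fin.sum_univ_two]

/-- for `0 < a < 1` and `f(z,w) = (z² + aw, az)`, if `|z| > 3` and
`|z| > |w|`, then the image `(z', w') = f(z, w)` satisfies `|z'| > 3`, `|z'| > |w'|`,
and `‖f(z,w)‖ ≥ ‖(z,w)‖ + 1`. -/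
theorem henon_filtration_estimate (a : ℝ) (ha0 : 0 < a) (ha1 : a < 1)
    (p : E2) (hz : 3 < ‖p 0‖) (hzw : ‖p 1‖ < ‖p 0‖) :
    3 < ‖henon (a : ℂ) p 0‖ ∧
      ‖henon (a : ℂ) p 1‖ < ‖henon (a : ℂ) p 0‖ ∧
      ‖p‖ + 1 ≤ ‖henon (a : ℂ) p‖ := by
  set z := p 0 with hzdef
  set w := p 1 with hwdef
  have h0 : henon (a : ℂ) p 0 = z ^ 2 + (a : ℂ) * w := rfl
  have h1 : henon (a : ℂ) p 1 = (a : ℂ) * z := rfl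
  have hna : ‖(a : ℂ)‖ = a := by
    simp [abs_of_pos ha0]
  have hw0 : 0 ≤ ‖w‖ := norm_nonneg _
  -- lower bound on ‖z'‖
  have hlow : ‖z‖ ^ 2 - a * ‖w‖ ≤ ‖henon (a : ℂ) p 0‖ := by
    rw [h0]
    have htri : ‖z ^ 2‖ ≤ ‖z ^ 2 + (a : ℂ) * w‖ + ‖(a : ℂ) * w‖ := by
      have := norm_add_le (z ^ 2 + (a : ℂ) * w) (-((a : ℂ) * w))
      simpa using this
    rw [norm_pow, norm_mul, hna] at htri
    linarith
  have hlow2 : ‖z‖ ^ 2 - ‖z‖ ≤ ‖henon (a : ℂ) p 0‖ := by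
    nlinarith
  have h3 : 3 < ‖henon (a : ℂ) p 0‖ := by nlinarith
  have h1n : ‖henon (a : ℂ) p 1‖ = a * ‖z‖ := by
    rw [h1, norm_mul, hna]
  have h2 : ‖henon (a : ℂ) p 1‖ < ‖henon (a : ℂ) p 0‖ := by
    rw [h1n]; nlinarith
  refine ⟨h3, h2, ?_⟩
  -- norm estimate
  have hpn : ‖p‖ ≤ Real.sqrt 2 * ‖z‖ := by
    rw [E2_norm_eq]
    have : ‖z‖ ^ 2 + ‖w‖ ^ 2 ≤ 2 * ‖z‖ ^ 2 := by nlinarith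
    calc Real.sqrt (‖z‖ ^ 2 + ‖w‖ ^ 2) ≤ Real.sqrt (2 * ‖z‖ ^ 2) :=
          Real.sqrt_le_sqrt this
      _ = Real.sqrt 2 * ‖z‖ := by
          rw [Real.sqrt_mul (by norm_num), Real.sqrt_sq (by positivity)]
  have hfn : ‖henon (a : ℂ) p 0‖ ≤ ‖henon (a : ℂ) p‖ := by
    rw [E2_norm_eq (henon (a : ℂ) p)]
    have h := Real.sqrt_le_sqrt (le_add_of_nonneg_right
        (sq_nonneg ‖henon (a : ℂ) p 1‖)
        (a := ‖henon (a : ℂ) p 0‖ ^ 2))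
    rwa [Real.sqrt_sq (norm_nonneg _)] at h
  have hs2 : Real.sqrt 2 < 1.5 := by
    rw [show (1.5 : ℝ) = Real.sqrt (1.5 ^ 2) by rw [Real.sqrt_sq]; norm_num]
    exact Real.sqrt_lt_sqrt (by norm_num) (by norm_num)
  have : Real.sqrt 2 * ‖z‖ + 1 ≤ ‖z‖ ^ 2 - ‖z‖ := by nlinarith
  linarith

end
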